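/- The compact space {0,1}^{ω₁} with the product topology does not satisfy the selection principle S₁^{ω₁}(𝒪,𝒪): there exists an ω₁-indexed sequence of open covers (𝒰_α : α < ω₁) such that no choice of one member from each 𝒰_α yields a cover. -/

import Mathlib

open Set

/-- The set of ordinals below ω₁, as an index type of cardinality ℵ₁. -/
def Omega1 : Type 1 := {o : Ordinal.{0} // o < (Cardinal.aleph.{0} 1).ord}

/-- `𝒰` is an open cover of the space `X`. -/
def IsOpenCover {X : Type*} [TopologicalSpace X] (𝒰 : Set (Set X)) : Prop :=
  (∀ U ∈ 𝒰, IsOpen U) ∧ ⋃₀ 𝒰 = Set.univ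

/-- The compact space `{0,1}^{ω₁}` does not satisfy `S₁^{ω₁}(𝒪,𝒪)`. -/
theorem stmt2 :
    ∃ 𝒰 : Omega1 → Set (Set (Omega1 → Bool)),
      (∀ α, IsOpenCover (𝒰 α)) ∧
        ¬ ∃ U : Omega1 → Set (Omega1 → Bool),
            (∀ α, U α ∈ 𝒰 α) ∧ (⋃ α, U α) = Set.univ := by
  refine ⟨fun α => {S : Set (Omega1 → Bool) | ∃ b : Bool, S = {f | f α = b}}, fun α => ⟨?_, ?_⟩, ?_⟩
  · rintro S ⟨b, rfl⟩
    exact (isOpen_discrete {b}).preimage (continuous_apply (A := fun _ : Omega1 => Bool) α)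
  · ext f
    simp only [mem_sUnion, mem_univ, iff_true]
    exact ⟨{g | g α = f α}, ⟨f α, rfl⟩, rfl⟩
  · rintro ⟨U, hU, hcov⟩
    choose b hb using hU
    set f : Omega1 → Bool := fun α => !(b α) with hf
    have : f ∈ ⋃ α, U α := hcov ▸ mem_univ f
    obtain ⟨α, hα⟩ := mem_iUnion.mp this
    rw [hb α] at hα
    simp [hf] at hα
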